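/- Let N ∈ ℕ, let Φ ∈ ℂ^{N×N} be a Hermitian positive semidefinite matrix, and let v ∈ ℂ^N. For λ > 0 the matrix λ·1 + Φ is invertible, and the function λ ↦ vᴴ·(λ·1 + Φ)⁻¹·Φ·(λ·1 + Φ)⁻¹·v is antitone (monotonically nonincreasing) on (0, ∞). -/

import Mathlib

open Matrix
open scoped ComplexOrder

private lemma conj_mul_conj {n : Type*} [Fintype n] [DecidableEq n]
    (U A B : Matrix n n ℂ) (h : star U * U = 1) :
    (U * A * star U) * (U * B * star U) = U * (A * B) * star U := by
  simp only [mul_assoc]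
  rw [← mul_assoc (star U) U (B * star U), h, one_mul]

/-- Matrix form of the power monotonicity result: for a Hermitian positive
semidefinite `Φ` and any `v`, the matrix `λ·1 + Φ` is invertible for `λ > 0`, and
`λ ↦ vᴴ (λ·1 + Φ)⁻¹ Φ (λ·1 + Φ)⁻¹ v` is antitone on `(0, ∞)`. -/
theorem stmt_14 (N : ℕ) (Φ : Matrix (Fin N) (Fin N) ℂ) (hΦ : Φ.PosSemidef)
    (v : Fin N → ℂ) :
    (∀ lam : ℝ, 0 < lam →
      IsUnit ((lam : ℂ) • (1 : Matrix (Fin N) (Fin N) ℂ) + Φ)) ∧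
    AntitoneOn (fun lam : ℝ =>
      star v ⬝ᵥ ((((lam : ℂ) • (1 : Matrix (Fin N) (Fin N) ℂ) + Φ)⁻¹ * Φ *
        (((lam : ℂ) • (1 : Matrix (Fin N) (Fin N) ℂ) + Φ)⁻¹)) *ᵥ v))
      (Set.Ioi 0) := by
  classical
  have hH := hΦ.1
  set U : Matrix (Fin N) (Fin N) ℂ := (hH.eigenvectorUnitary : Matrix (Fin N) (Fin N) ℂ) with hUdef
  set d : Fin N → ℝ := hH.eigenvalues with hddef
  have hUU : U * star U = 1 := Matrix.mem_unitaryGroup_iff.mp hH.eigenvectorUnitary.2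
  have hUU' : star U * U = 1 := Matrix.mem_unitaryGroup_iff'.mp hH.eigenvectorUnitary.2
  have hd : ∀ i, 0 ≤ d i := fun i => hΦ.eigenvalues_nonneg i
  have hspec : Φ = U * Matrix.diagonal (fun i => ((d i : ℝ) : ℂ)) * star U := by
    exact hH.spectral_theorem
  -- decomposition of lam • 1 + Φ
  have hdecomp : ∀ lam : ℝ,
      (lam : ℂ) • (1 : Matrix (Fin N) (Fin N) ℂ) + Φ
        = U * Matrix.diagonal (fun i => ((lam + d i : ℝ) : ℂ)) * star U := by
    intro lam
    have h1 : (lam : ℂ) • (1 : Matrix (Fin N) (Fin N) ℂ)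
        = U * Matrix.diagonal (fun _ : Fin N => (lam : ℂ)) * star U := by
      rw [← Matrix.smul_one_eq_diagonal]
      rw [Matrix.mul_smul, Matrix.smul_mul, mul_one, hUU]
    conv_lhs => rw [hspec, h1]
    rw [← Matrix.add_mul, ← Matrix.mul_add, Matrix.diagonal_add]
    congr 1
    ext i
    push_cast
    ring
  have hpos : ∀ (lam : ℝ), 0 < lam → ∀ i, (0:ℝ) < lam + d i := fun lam hlam i =>
    add_pos_of_pos_of_nonneg hlam (hd i)
  -- right inverse
  have hmul : ∀ lam : ℝ, 0 < lam →
      ((lam : ℂ) • (1 : Matrix (Fin N) (Fin N) ℂ) + Φ) *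
        (U * Matrix.diagonal (fun i => (((lam + d i)⁻¹ : ℝ) : ℂ)) * star U) = 1 := by
    intro lam hlam
    rw [hdecomp lam, conj_mul_conj _ _ _ hUU', Matrix.diagonal_mul_diagonal]
    have : (fun i => ((lam + d i : ℝ) : ℂ) * (((lam + d i)⁻¹ : ℝ) : ℂ))
        = fun _ : Fin N => (1 : ℂ) := by
      funext i
      rw [← Complex.ofReal_mul, mul_inv_cancel₀ (hpos lam hlam i).ne']
      norm_num
    rw [this, Matrix.diagonal_one, mul_one, hUU]
  have hunit : ∀ lam : ℝ, 0 < lam →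
      IsUnit ((lam : ℂ) • (1 : Matrix (Fin N) (Fin N) ℂ) + Φ) := by
    intro lam hlam
    exact (Matrix.isUnit_iff_isUnit_det _).mpr (Matrix.isUnit_det_of_right_inverse (hmul lam hlam))
  have hinv : ∀ lam : ℝ, 0 < lam →
      ((lam : ℂ) • (1 : Matrix (Fin N) (Fin N) ℂ) + Φ)⁻¹
        = U * Matrix.diagonal (fun i => (((lam + d i)⁻¹ : ℝ) : ℂ)) * star U := by
    intro lam hlam
    exact Matrix.inv_eq_right_inv (hmul lam hlam)
  -- the middle matrix
  have hM : ∀ lam : ℝ, 0 < lam →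
      ((lam : ℂ) • (1 : Matrix (Fin N) (Fin N) ℂ) + Φ)⁻¹ * Φ *
        ((lam : ℂ) • (1 : Matrix (Fin N) (Fin N) ℂ) + Φ)⁻¹
      = U * Matrix.diagonal (fun i => ((d i / (lam + d i) ^ 2 : ℝ) : ℂ)) * star U := by
    intro lam hlam
    rw [hinv lam hlam]
    conv_lhs => rw [hspec]
    rw [conj_mul_conj _ _ _ hUU', conj_mul_conj _ _ _ hUU',
      Matrix.diagonal_mul_diagonal, Matrix.diagonal_mul_diagonal]
    have heq : (fun i => ((lam + d i)⁻¹ : ℝ) * (d i : ℝ) * (((lam + d i)⁻¹ : ℝ)))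
        = fun i => (d i / (lam + d i) ^ 2 : ℝ) := by
      funext i; field_simp
    have heq' : (fun i => (((lam + d i)⁻¹ : ℝ) : ℂ) * ((d i : ℝ) : ℂ) * ((((lam + d i)⁻¹ : ℝ)) : ℂ))
        = fun i => ((d i / (lam + d i) ^ 2 : ℝ) : ℂ) := by
      funext i
      rw [← Complex.ofReal_mul, ← Complex.ofReal_mul, congrFun heq i]
    rw [heq']
  refine ⟨hunit, ?_⟩
  intro a ha b hb hab
  simp only [Set.mem_Ioi] at ha hb
  -- difference of the middle matrices is PSD
  have hent : ∀ i, (0:ℝ) ≤ d i / (a + d i) ^ 2 - d i / (b + d i) ^ 2 := by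
    intro i
    have h1 : d i / (b + d i) ^ 2 ≤ d i / (a + d i) ^ 2 := by
      apply div_le_div_of_nonneg_left (hd i) (pow_pos (hpos a ha i) 2)
      exact pow_le_pow_left₀ (hpos a ha i).le (by linarith) 2
    linarith
  have hpsd : Matrix.PosSemidef
      ((((a : ℂ) • (1 : Matrix (Fin N) (Fin N) ℂ) + Φ)⁻¹ * Φ *
        (((a : ℂ) • (1 : Matrix (Fin N) (Fin N) ℂ) + Φ)⁻¹)) -
       (((b : ℂ) • (1 : Matrix (Fin N) (Fin N) ℂ) + Φ)⁻¹ * Φ *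
        (((b : ℂ) • (1 : Matrix (Fin N) (Fin N) ℂ) + Φ)⁻¹))) := by
    rw [hM a ha, hM b hb, ← Matrix.sub_mul, ← Matrix.mul_sub, Matrix.diagonal_sub]
    have hdiag : Matrix.PosSemidef (Matrix.diagonal
        (fun i => ((d i / (a + d i) ^ 2 : ℝ) : ℂ) - ((d i / (b + d i) ^ 2 : ℝ) : ℂ))) := by
      refine Matrix.PosSemidef.diagonal fun i => ?_
      simp only [Pi.zero_apply, ← Complex.ofReal_sub]
      exact Complex.zero_le_real.mpr (hent i)
    simpa [Matrix.star_eq_conjTranspose] using hdiag.mul_mul_conjTranspose_same U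
  have h0 := hpsd.dotProduct_mulVec_nonneg v
  rw [Matrix.sub_mulVec, dotProduct_sub] at h0
  exact sub_nonneg.mp h0
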